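/- Suppose virtual extraction holds with belief sets Π(t) norm compact convex and Π norm continuous on compact T. Then virtual extraction can be achieved with a finite menu: for every continuous v : T → ℝ and every ε > 0 there exist finitely many contracts c₁, …, c_n ∈ C(S) such that for each t ∈ T there is an index i with 0 ≤ v(t) − ∫c_i dπ ≤ 2ε for all π ∈ Π(t), and for every j, v(t) − ∫c_j dπ ≤ 2ε for all π ∈ Π(t). -/

import Mathlib

open MeasureTheory Set

/-- Total variation distance between two measures (encoded as the supremum over measurable
sets of the difference of the measures). -/
noncomputable def tvDist {S : Type*} [MeasurableSpace S]
    (π ρ : MeasureTheory.Measure S) : ℝ :=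
  ⨆ A : {A : Set S // MeasurableSet A}, |(π A.1).toReal - (ρ A.1).toReal|

theorem stmt_17
    {T : Type*} [MetricSpace T] [CompactSpace T]
    {S : Type*} [MeasurableSpace S] [MetricSpace S] [CompactSpace S] [BorelSpace S]
    (B : T → Set (Measure S))
    (hBprob : ∀ t : T, ∀ π ∈ B t, IsProbabilityMeasure π)
    (hconv : ∀ t : T, ∀ π ∈ B t, ∀ ρ ∈ B t, ∀ a ∈ Icc (0:ℝ) 1,
      ENNReal.ofReal a • π + ENNReal.ofReal (1 - a) • ρ ∈ B t)
    (hcomp : ∀ t : T, ∀ f : ℕ → Measure S, (∀ n, f n ∈ B t) →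
      ∃ ρ ∈ B t, ∃ φ : ℕ → ℕ, StrictMono φ ∧
        Filter.Tendsto (fun n => tvDist (f (φ n)) ρ) Filter.atTop (nhds 0))
    (hcontB : ∀ t : T, ∀ δ > (0:ℝ), ∃ η > (0:ℝ), ∀ t' : T, dist t t' < η →
      (∀ π ∈ B t, ∃ π' ∈ B t', tvDist π π' < δ) ∧
      (∀ π' ∈ B t', ∃ π ∈ B t, tvDist π π' < δ))
    (hve : ∀ v : C(T, ℝ), ∀ ε > (0:ℝ), ∃ c : C(T × S, ℝ), ∀ t : T, ∀ π ∈ B t,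
      (0 ≤ v t - ∫ s, c (t, s) ∂π ∧ v t - ∫ s, c (t, s) ∂π ≤ ε) ∧
      (0 ≤ sSup {x : ℝ | ∃ t' : T, x = v t - ∫ s, c (t', s) ∂π} ∧
        sSup {x : ℝ | ∃ t' : T, x = v t - ∫ s, c (t', s) ∂π} ≤ ε)) :
    ∀ v : C(T, ℝ), ∀ ε > (0:ℝ), ∃ (n : ℕ) (cs : Fin n → C(S, ℝ)), ∀ t : T,
      (∃ i : Fin n, ∀ π ∈ B t,
        0 ≤ v t - ∫ s, cs i s ∂π ∧ v t - ∫ s, cs i s ∂π ≤ 2 * ε) ∧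
      (∀ j : Fin n, ∀ π ∈ B t, v t - ∫ s, cs j s ∂π ≤ 2 * ε) := by
  intro v ε hε
  obtain ⟨c, hc⟩ := hve v ε hε
  -- integrability of sections
  have hint : ∀ (t' : T) (π : Measure S), IsProbabilityMeasure π →
      Integrable (fun s => c (t', s)) π := by
    intro t' π hπ
    haveI := hπ
    exact integrableOn_univ.mp (ContinuousOn.integrableOn_compact isCompact_univ
      (c.continuous.comp (Continuous.prodMk_right t')).continuousOn)
  have hnorm : ∀ (t' : T) (s : S), |c (t', s)| ≤ ‖c‖ := fun t' s => c.norm_coe_le_norm (t', s)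
  -- global upper bound from the sSup clause
  have hub : ∀ t : T, ∀ π ∈ B t, ∀ t' : T, v t - ∫ s, c (t', s) ∂π ≤ ε := by
    intro t π hπ t'
    have hprob := hBprob t π hπ
    have hbdd : BddAbove {x : ℝ | ∃ t' : T, x = v t - ∫ s, c (t', s) ∂π} := by
      refine ⟨v t + ‖c‖, ?_⟩
      rintro x ⟨t'', rfl⟩
      have h0 : ‖∫ s, c (t'', s) ∂π‖ ≤ ‖c‖ * (π Set.univ).toReal :=
        norm_integral_le_of_norm_le_const (Filter.Eventually.of_forall fun s => by
          simpa [Real.norm_eq_abs] using hnorm t'' s)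
      have h1 : |∫ s, c (t'', s) ∂π| ≤ ‖c‖ := by
        simpa [Real.norm_eq_abs, measure_univ] using h0
      have := (abs_le.1 h1).1
      linarith
    exact le_trans (le_csSup hbdd ⟨t', rfl⟩) (hc t π hπ).2.2
  -- uniform continuity
  have huc : UniformContinuous (⇑c) := CompactSpace.uniformContinuous_of_continuous c.continuous
  obtain ⟨δ, hδpos, hδ⟩ := Metric.uniformContinuous_iff.1 huc (ε/2) (by linarith)
  have hδ' : ∀ t t' : T, dist t t' < δ → ∀ s : S, |c (t, s) - c (t', s)| ≤ ε/2 := by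
    intro t t' h s
    have hd : dist ((t, s) : T × S) (t', s) < δ := by
      rw [Prod.dist_eq]
      exact max_lt h (by rw [dist_self]; exact hδpos)
    have := hδ hd
    rw [Real.dist_eq] at this
    linarith
  -- finite cover
  have hcov : (Set.univ : Set T) ⊆ ⋃ t : T, Metric.ball t δ := fun t _ =>
    mem_iUnion.2 ⟨t, Metric.mem_ball_self hδpos⟩
  obtain ⟨F, hF⟩ := isCompact_univ.elim_finite_subcover (fun t : T => Metric.ball t δ)
    (fun t => Metric.isOpen_ball) hcov
  refine ⟨F.card, fun i => ContinuousMap.mk (fun s => c ((F.equivFin.symm i : T), s) - ε/2)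
    ((c.continuous.comp (Continuous.prodMk_right _)).sub continuous_const), ?_⟩
  -- integral of a menu item
  have hmenu : ∀ (t0 : T) (π : Measure S), IsProbabilityMeasure π →
      ∫ s, (c (t0, s) - ε/2) ∂π = (∫ s, c (t0, s) ∂π) - ε/2 := by
    intro t0 π hπ
    rw [integral_sub (hint t0 π hπ) (integrable_const _), integral_const]
    simp [measure_univ]
  intro t
  have ht := hF (mem_univ t)
  simp only [Set.mem_iUnion] at ht
  obtain ⟨t0, ht0F, htb⟩ := ht
  constructor
  · refine ⟨F.equivFin ⟨t0, ht0F⟩, ?_⟩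
    intro π hπ
    have hprob := hBprob t π hπ
    have hsymm : (F.equivFin.symm (F.equivFin ⟨t0, ht0F⟩) : T) = t0 := by simp
    simp only [ContinuousMap.coe_mk, hsymm, hmenu t0 π hprob]
    -- bound |∫ c(t0) - ∫ c(t)| ≤ ε/2
    have hdiff : |(∫ s, c (t0, s) ∂π) - ∫ s, c (t, s) ∂π| ≤ ε/2 := by
      rw [← integral_sub (hint t0 π hprob) (hint t π hprob)]
      have h0 : ‖∫ s, (c (t0, s) - c (t, s)) ∂π‖ ≤ (ε/2) * (π Set.univ).toReal :=
        norm_integral_le_of_norm_le_const (Filter.Eventually.of_forall fun s => by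
          simpa [Real.norm_eq_abs] using hδ' t0 t (by rw [dist_comm]; exact htb) s)
      simpa [Real.norm_eq_abs, measure_univ] using h0
    have hlow : 0 ≤ v t - ∫ s, c (t, s) ∂π := (hc t π hπ).1.1
    have hup : v t - ∫ s, c (t0, s) ∂π ≤ ε := hub t π hπ t0
    have := abs_le.1 hdiff
    constructor <;> linarith [this.1, this.2]
  · intro j π hπ
    have hprob := hBprob t π hπ
    simp only [ContinuousMap.coe_mk, hmenu _ π hprob]
    have hup : v t - ∫ s, c ((F.equivFin.symm j : T), s) ∂π ≤ ε := hub t π hπ _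
    linarith
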